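/- Unbiasedness with joint random throttling under query randomization: suppose for each advertiser a, a uniformly random subset W_a of size Q[a] of its N[a] eligible queries is retained, independently of the query assignment Z (bid treatment: the throttling distribution does not depend on Z). Under query randomization with probability p per query, the estimator τ̂(Z,W) = Σ_{i: Z_i=1, W_i=1} Yᵢ(Z,W)/p − Σ_{i: Z_i=0, W_i=1} Yᵢ(Z,W)/(1−p) is unbiased for τ* = E_W[Σᵢ(Yᵢ(1⃗,W) − Yᵢ(0⃗,W))]. -/

import Mathlib

lemma key_marginal {Nq : ℕ} (p : ℝ) (r0 : Fin Nq) (φ : Bool → ℝ) :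
    ∑ Z : Fin Nq → Bool, (∏ r, if Z r then p else 1 - p) * φ (Z r0)
      = p * φ true + (1 - p) * φ false := by
  classical
  have h : ∀ Z : Fin Nq → Bool, (∏ r, if Z r then p else 1 - p) * φ (Z r0)
      = ∏ r, (if r = r0 then (if Z r then p * φ true else (1 - p) * φ false)
              else (if Z r then p else 1 - p)) := by
    intro Z
    rw [(Finset.mul_prod_erase Finset.univ
        (fun r => (if r = r0 then (if Z r then p * φ true else (1 - p) * φ false)
              else (if Z r then p else 1 - p))) (Finset.mem_univ r0)).symm,
        ← Finset.mul_prod_erase Finset.univ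
          (fun r => if Z r then p else 1 - p) (Finset.mem_univ r0)]
    have h2 : (Finset.univ.erase r0).prod
        (fun r => if r = r0 then (if Z r then p * φ true else (1 - p) * φ false)
              else (if Z r then p else 1 - p))
        = (Finset.univ.erase r0).prod (fun r => if Z r then p else 1 - p) := by
      apply Finset.prod_congr rfl
      intro r hr
      simp only [if_neg (Finset.ne_of_mem_erase hr)]
    rw [h2]
    simp only [if_pos rfl]
    cases hb : Z r0 <;> simp [hb] <;> ring
  simp_rw [h]
  have hps := Fintype.prod_sum (κ := fun _ : Fin Nq => Bool) (R := ℝ)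
    (fun r b => if r = r0 then (if b then p * φ true else (1 - p) * φ false)
              else (if b then p else 1 - p))
  rw [← hps]
  rw [Finset.prod_eq_single r0]
  · simp [add_comm]
  · intro r _ hr; simp [hr]
  · simp

theorem stmt10 (Nq n m : ℕ) (q : Fin n → Fin Nq) (p : ℝ) (hp : 0 < p) (hp1 : p < 1)
    (μ : Fin m → ℝ) (hμ0 : ∀ w, 0 ≤ μ w) (hμ1 : ∑ w, μ w = 1)
    (Y : Fin n → (Fin Nq → Bool) → Fin m → ℝ)
    (hY : ∀ (i : Fin n) (Z Z' : Fin Nq → Bool) (w : Fin m),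
      Z (q i) = Z' (q i) → Y i Z w = Y i Z' w) :
    ∑ w : Fin m, μ w *
      (∑ Z : Fin Nq → Bool,
        (∏ r, if Z r then p else 1 - p) *
          ((∑ i ∈ Finset.univ.filter (fun i => Z (q i) = true), Y i Z w / p)
           - ∑ i ∈ Finset.univ.filter (fun i => Z (q i) = false), Y i Z w / (1 - p)))
    = ∑ w : Fin m, μ w *
        (∑ i, (Y i (fun _ => true) w - Y i (fun _ => false) w)) := by
  have hp' : p ≠ 0 := ne_of_gt hp
  have hp1' : (1 : ℝ) - p ≠ 0 := by linarith
  apply Finset.sum_congr rfl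
  intro w _
  congr 1
  have hstep : ∀ Z : Fin Nq → Bool,
      (∏ r, if Z r then p else 1 - p) *
        ((∑ i ∈ Finset.univ.filter (fun i => Z (q i) = true), Y i Z w / p)
           - ∑ i ∈ Finset.univ.filter (fun i => Z (q i) = false), Y i Z w / (1 - p))
      = ∑ i, (∏ r, if Z r then p else 1 - p) *
          (if Z (q i) then Y i (fun _ => true) w / p
            else -(Y i (fun _ => false) w / (1 - p))) := by
    intro Z
    rw [Finset.sum_filter, Finset.sum_filter, ← Finset.sum_sub_distrib,
        Finset.mul_sum]
    apply Finset.sum_congr rfl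
    intro i _
    congr 1
    cases hb : Z (q i) with
    | true =>
      have := hY i Z (fun _ => true) w (by simp [hb])
      simp [hb, this]
    | false =>
      have := hY i Z (fun _ => false) w (by simp [hb])
      simp [hb, this]
  simp_rw [hstep]
  rw [Finset.sum_comm]
  apply Finset.sum_congr rfl
  intro i _
  rw [key_marginal p (q i) (fun b => if b then Y i (fun _ => true) w / p
        else -(Y i (fun _ => false) w / (1 - p)))]
  simp only [if_true, Bool.false_eq_true, if_false]
  field_simp
  ring
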